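/- Let R₁ and R₂ be n×n Hermitian positive definite matrices and X an n×m complex matrix. Then tr(X^H (R₁ + R₂)^{-1} X) is the minimum over all n×m complex matrices Z of tr(Z^H R₁^{-1} Z) + tr((X − Z)^H R₂^{-1} (X − Z)); moreover the minimum is attained at Z = R₁ (R₁ + R₂)^{-1} X. (Identity (13) used for the problem reformulation in Section III-C.) -/

import Mathlib

open Matrix
open scoped ComplexOrder

lemma trace_re_nonneg_of_posSemidef {n : ℕ} {M : Matrix (Fin n) (Fin n) ℂ}
    (hM : M.PosSemidef) : 0 ≤ M.trace.re := by
  rw [Matrix.trace]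
  rw [Complex.re_sum]
  apply Finset.sum_nonneg
  intro i _
  have hii : (0:ℂ) ≤ M i i := by
    exact hM.diag_nonneg
  simpa [Matrix.diag_apply] using (Complex.le_def.mp hii).1

set_option maxHeartbeats 1000000 in
lemma key_identity {n m : ℕ} (R₁ R₂ : Matrix (Fin n) (Fin n) ℂ)
    (h₁ : R₁.PosDef) (h₂ : R₂.PosDef) (X Z : Matrix (Fin n) (Fin m) ℂ) :
    Zᴴ * R₁⁻¹ * Z + (X - Z)ᴴ * R₂⁻¹ * (X - Z)
      = Xᴴ * (R₁ + R₂)⁻¹ * X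
        + (Z - R₁ * ((R₁ + R₂)⁻¹ * X))ᴴ * (R₁⁻¹ + R₂⁻¹) * (Z - R₁ * ((R₁ + R₂)⁻¹ * X)) := by
  have hS : (R₁ + R₂).PosDef := h₁.add h₂
  set S := R₁ + R₂ with hSdef
  set Y := S⁻¹ * X with hY
  set W := Z - R₁ * Y with hW
  have hSu : IsUnit S := hS.isUnit
  have hSc : S * S⁻¹ = 1 := mul_nonsing_inv S (isUnit_iff_isUnit_det S |>.mp hSu)
  have hSc' : S⁻¹ * S = 1 := nonsing_inv_mul S (isUnit_iff_isUnit_det S |>.mp hSu)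
  have h1c : R₁ * R₁⁻¹ = 1 := mul_nonsing_inv R₁ (isUnit_iff_isUnit_det R₁ |>.mp h₁.isUnit)
  have h1c' : R₁⁻¹ * R₁ = 1 := nonsing_inv_mul R₁ (isUnit_iff_isUnit_det R₁ |>.mp h₁.isUnit)
  have h2c : R₂ * R₂⁻¹ = 1 := mul_nonsing_inv R₂ (isUnit_iff_isUnit_det R₂ |>.mp h₂.isUnit)
  have h2c' : R₂⁻¹ * R₂ = 1 := nonsing_inv_mul R₂ (isUnit_iff_isUnit_det R₂ |>.mp h₂.isUnit)
  have hR1H : R₁ᴴ = R₁ := h₁.isHermitian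
  have hR2H : R₂ᴴ = R₂ := h₂.isHermitian
  have hSH : Sᴴ = S := hS.isHermitian
  have hSiH : (S⁻¹)ᴴ = S⁻¹ := hS.isHermitian.inv
  have h1iH : (R₁⁻¹)ᴴ = R₁⁻¹ := h₁.isHermitian.inv
  have h2iH : (R₂⁻¹)ᴴ = R₂⁻¹ := h₂.isHermitian.inv
  have hX : X = S * Y := by
    rw [hY, ← Matrix.mul_assoc, hSc, Matrix.one_mul]
  have hZ : Z = W + R₁ * Y := by rw [hW]; abel
  have hXZ : X - Z = R₂ * Y - W := by
    rw [hX, hZ, hSdef]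
    simp [Matrix.add_mul]
    abel
  have e1 : ∀ M : Matrix (Fin n) (Fin m) ℂ, R₁ * (R₁⁻¹ * M) = M := fun M => by
    rw [← Matrix.mul_assoc, h1c, Matrix.one_mul]
  have e2 : ∀ M : Matrix (Fin n) (Fin m) ℂ, R₂ * (R₂⁻¹ * M) = M := fun M => by
    rw [← Matrix.mul_assoc, h2c, Matrix.one_mul]
  have e1' : ∀ M : Matrix (Fin n) (Fin m) ℂ, R₁⁻¹ * (R₁ * M) = M := fun M => by
    rw [← Matrix.mul_assoc, h1c', Matrix.one_mul]
  have e2' : ∀ M : Matrix (Fin n) (Fin m) ℂ, R₂⁻¹ * (R₂ * M) = M := fun M => by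
    rw [← Matrix.mul_assoc, h2c', Matrix.one_mul]
  have eXSX : Xᴴ * S⁻¹ * X = Yᴴ * (S * Y) := by
    rw [hX, conjTranspose_mul, hSH, Matrix.mul_assoc, Matrix.mul_assoc, ← Matrix.mul_assoc S,
      hSc, Matrix.one_mul]
  rw [eXSX, hXZ, hZ]
  simp only [conjTranspose_add, conjTranspose_sub, conjTranspose_mul, hR1H, hR2H, h1iH, h2iH]
  simp only [Matrix.add_mul, Matrix.mul_add, Matrix.sub_mul, Matrix.mul_sub, Matrix.mul_assoc,
    e1, e2, e1', e2']
  rw [hSdef]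
  simp only [Matrix.add_mul, Matrix.mul_add]
  abel

theorem stmt16 {n m : ℕ} (R₁ R₂ : Matrix (Fin n) (Fin n) ℂ)
    (h₁ : R₁.PosDef) (h₂ : R₂.PosDef) (X : Matrix (Fin n) (Fin m) ℂ) :
    (∀ Z : Matrix (Fin n) (Fin m) ℂ,
      (Xᴴ * (R₁ + R₂)⁻¹ * X).trace.re
        ≤ (Zᴴ * R₁⁻¹ * Z).trace.re + ((X - Z)ᴴ * R₂⁻¹ * (X - Z)).trace.re) ∧
    ((fun Z : Matrix (Fin n) (Fin m) ℂ =>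
        (Zᴴ * R₁⁻¹ * Z).trace.re + ((X - Z)ᴴ * R₂⁻¹ * (X - Z)).trace.re)
      (R₁ * (R₁ + R₂)⁻¹ * X)
      = (Xᴴ * (R₁ + R₂)⁻¹ * X).trace.re) := by
  have hA : (R₁⁻¹ + R₂⁻¹).PosSemidef := (h₁.inv.add h₂.inv).posSemidef
  have key := key_identity R₁ R₂ h₁ h₂ X
  constructor
  · intro Z
    have hk := key Z
    have htr : (Zᴴ * R₁⁻¹ * Z).trace.re + ((X - Z)ᴴ * R₂⁻¹ * (X - Z)).trace.re
        = (Xᴴ * (R₁ + R₂)⁻¹ * X).trace.re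
          + ((Z - R₁ * ((R₁ + R₂)⁻¹ * X))ᴴ * (R₁⁻¹ + R₂⁻¹)
              * (Z - R₁ * ((R₁ + R₂)⁻¹ * X))).trace.re := by
      have := congrArg (fun M : Matrix (Fin m) (Fin m) ℂ => M.trace.re) hk
      simpa [trace_add, Complex.add_re] using this
    rw [htr]
    have := trace_re_nonneg_of_posSemidef
      (hA.conjTranspose_mul_mul_same (Z - R₁ * ((R₁ + R₂)⁻¹ * X)))
    linarith
  · have hk := key (R₁ * (R₁ + R₂)⁻¹ * X)
    have hz : R₁ * (R₁ + R₂)⁻¹ * X - R₁ * ((R₁ + R₂)⁻¹ * X) = 0 := by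
      rw [Matrix.mul_assoc]; exact sub_self _
    rw [hz] at hk
    simp only [conjTranspose_zero, Matrix.mul_zero, add_zero, Matrix.zero_mul] at hk
    have := congrArg (fun M : Matrix (Fin m) (Fin m) ℂ => M.trace.re) hk
    simpa [trace_add, Complex.add_re] using this
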